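/- The 3×3 skew-symmetric matrix C with rows (0, −1, −1), (1, 0, 0), (1, 0, 0) is an unfolding of the 2×2 skew-symmetrizable matrix B with rows (0, −1), (2, 0), with respect to the index sets E_1 = {1} and E_2 = {2, 3}: for every finite sequence k_1, …, k_r of indices in {1, 2}, the matrix μ̂_{k_1}⋯μ̂_{k_r}(C) satisfies assertions (1)–(2) with respect to μ_{k_1}⋯μ_{k_r}(B). -/

import Mathlib

open Matrix

/-- Matrix mutation in direction `k`. -/
def mutate {n : ℕ} (B : Matrix (Fin n) (Fin n) ℤ) (k : Fin n) : Matrix (Fin n) (Fin n) ℤ :=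
  Matrix.of fun i j =>
    if i = k ∨ j = k then -B i j
    else B i j + (|B i k| * B k j + B i k * |B k j|) / 2

/-- The mutation class of `B`: all matrices obtained from `B` by finite sequences of mutations. -/
def mutationClass {n : ℕ} (B : Matrix (Fin n) (Fin n) ℤ) : Set (Matrix (Fin n) (Fin n) ℤ) :=
  {B' | ∃ l : List (Fin n), B' = l.foldl mutate B}

/-- `B` is skew-symmetrizable: there are positive integers `d i` with `b_ij d_j = -(b_ji d_i)`. -/
def IsSkewSymmetrizable {n : ℕ} (B : Matrix (Fin n) (Fin n) ℤ) : Prop :=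
  ∃ d : Fin n → ℤ, (∀ i, 0 < d i) ∧ ∀ i j, B i j * d j = -(B j i * d i)

/-- Assertions (1)–(2) of the definition of unfolding, for the fibers `E i = π ⁻¹ {i}`:
(1) for all `i` and all `b` the sum of `C a b` over `a ∈ E i` equals `B i (π b)`;
(2) if `B (π a) (π b) ≥ 0` then `C a b ≥ 0`. -/
def SatisfiesUnfoldingConds {m n : ℕ} (π : Fin m → Fin n)
    (B : Matrix (Fin n) (Fin n) ℤ) (C : Matrix (Fin m) (Fin m) ℤ) : Prop :=
  (∀ (i : Fin n) (b : Fin m),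
      (∑ a ∈ Finset.univ.filter (fun a => π a = i), C a b) = B i (π b)) ∧
  (∀ a b : Fin m, 0 ≤ B (π a) (π b) → 0 ≤ C a b)

/-- The composite mutation `μ̂_i`: the composition of the mutations `μ_a` over all
`a ∈ E i = π ⁻¹ {i}`, performed in a fixed order. -/
def compMutate {m n : ℕ} (π : Fin m → Fin n) (C : Matrix (Fin m) (Fin m) ℤ)
    (i : Fin n) : Matrix (Fin m) (Fin m) ℤ :=
  ((Finset.univ.filter (fun a => π a = i)).sort (· ≤ ·)).foldl mutate C

/-- `C` is an unfolding of `B` (w.r.t. the index sets `E i = π ⁻¹ {i}`): after any finite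
sequence of composite mutations, assertions (1)–(2) hold for the correspondingly
mutated matrices. -/
def IsUnfolding {m n : ℕ} (π : Fin m → Fin n) (B : Matrix (Fin n) (Fin n) ℤ)
    (C : Matrix (Fin m) (Fin m) ℤ) : Prop :=
  ∀ l : List (Fin n),
    SatisfiesUnfoldingConds π (l.foldl mutate B) (l.foldl (compMutate π) C)

/-- The given `3 × 3` skew-symmetric matrix is an unfolding of the `2 × 2` matrix `B` with
rows `(0, -1), (2, 0)`, with `E_1 = {1}` and `E_2 = {2, 3}`. -/

abbrev exπ : Fin 3 → Fin 2 := ![0, 1, 1]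
abbrev exB0 : Matrix (Fin 2) (Fin 2) ℤ := !![0, -1; 2, 0]
abbrev exC0 : Matrix (Fin 3) (Fin 3) ℤ := !![0, -1, -1; 1, 0, 0; 1, 0, 0]

lemma ex_sort0 : ((Finset.univ.filter (fun a => exπ a = 0)).sort (· ≤ ·)) = [0] := by
  have : (Finset.univ.filter (fun a => exπ a = 0)) = ({0} : Finset (Fin 3)) := by decide
  rw [this, Finset.sort_singleton]

lemma ex_sort1 : ((Finset.univ.filter (fun a => exπ a = 1)).sort (· ≤ ·)) = [1, 2] := by
  have : (Finset.univ.filter (fun a => exπ a = 1)) = ({1, 2} : Finset (Fin 3)) := by decide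
  rw [this]
  rw [Finset.sort_insert (· ≤ ·) (by decide) (by decide), Finset.sort_singleton]

lemma compMutate0 (C : Matrix (Fin 3) (Fin 3) ℤ) : compMutate exπ C 0 = mutate C 0 := by
  rw [compMutate, ex_sort0]; rfl

lemma compMutate1 (C : Matrix (Fin 3) (Fin 3) ℤ) :
    compMutate exπ C 1 = mutate (mutate C 1) 2 := by
  rw [compMutate, ex_sort1]; rfl

lemma ex_step (k : Fin 2) (B : Matrix (Fin 2) (Fin 2) ℤ) (C : Matrix (Fin 3) (Fin 3) ℤ)
    (h : (B = exB0 ∧ C = exC0) ∨ (B = -exB0 ∧ C = -exC0)) :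
    (mutate B k = exB0 ∧ compMutate exπ C k = exC0) ∨
    (mutate B k = -exB0 ∧ compMutate exπ C k = -exC0) := by
  rcases h with ⟨hB, hC⟩ | ⟨hB, hC⟩ <;> subst hB <;> subst hC <;> fin_cases k <;>
    [right; right; left; left] <;>
    refine ⟨by decide, ?_⟩ <;>
    first
      | exact (compMutate0 _).trans (by decide)
      | exact (compMutate1 _).trans (by decide)

lemma ex_key (l : List (Fin 2)) (B : Matrix (Fin 2) (Fin 2) ℤ) (C : Matrix (Fin 3) (Fin 3) ℤ)
    (h : (B = exB0 ∧ C = exC0) ∨ (B = -exB0 ∧ C = -exC0)) :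
    (l.foldl mutate B = exB0 ∧ l.foldl (compMutate exπ) C = exC0) ∨
    (l.foldl mutate B = -exB0 ∧ l.foldl (compMutate exπ) C = -exC0) := by
  induction l generalizing B C with
  | nil => simpa using h
  | cons k l ih => exact ih _ _ (ex_step k B C h)

theorem unfolding_example_one :
    IsUnfolding (![0, 1, 1] : Fin 3 → Fin 2)
      !![0, -1; 2, 0]
      !![0, -1, -1; 1, 0, 0; 1, 0, 0] := by
  intro l
  rcases ex_key l exB0 exC0 (Or.inl ⟨rfl, rfl⟩) with ⟨hB, hC⟩ | ⟨hB, hC⟩ <;>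
    rw [show (![0,1,1] : Fin 3 → Fin 2) = exπ from rfl, hB, hC] <;> refine ⟨by decide, fun a b => ?_⟩ <;>
      fin_cases a <;> fin_cases b <;> decide
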